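/- Let σ ⊆ ℝ^k be a smooth (unimodular) cone with respect to a lattice N_B, τ ⊆ ℝ^n smooth with respect to N_F, and Φ a linear map with Φ(N_B) ⊆ N_F. Then σ̃ + τ is a smooth cone with respect to N_B × N_F, where σ̃ is the graph of Φ over σ. -/

import Mathlib

open scoped Pointwise

noncomputable section

/-- A convex polyhedral cone: the set of nonnegative linear combinations of finitely many
vectors, i.e. the span over the semiring of nonnegative reals of a finite set. -/
def IsPolyCone {E : Type*} [AddCommMonoid E] [Module ℝ E] (C : Set E) : Prop :=
  ∃ s : Finset E,
    C = (Submodule.span {c : ℝ // 0 ≤ c} (s : Set E) : Submodule {c : ℝ // 0 ≤ c} E)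

/-- Nonnegative span of a set. -/
def posSpan {E : Type*} [AddCommMonoid E] [Module ℝ E] (s : Set E) : Set E :=
  (Submodule.span {c : ℝ // 0 ≤ c} s : Submodule {c : ℝ // 0 ≤ c} E)

/-- The graph of a map `Φ` over a set `σ`. -/
def graphOver {k n : ℕ} (Φ : (Fin k → ℝ) → (Fin n → ℝ)) (σ : Set (Fin k → ℝ)) :
    Set ((Fin k → ℝ) × (Fin n → ℝ)) :=
  (fun x => (x, Φ x)) '' σ

/-- The twisted cone `σ̃ + τ`: the Minkowski sum of the graph of `Φ` over `σ` with
`τ` embedded as `{0} × τ`. -/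
def twistedCone {k n : ℕ} (Φ : (Fin k → ℝ) → (Fin n → ℝ)) (σ : Set (Fin k → ℝ))
    (τ : Set (Fin n → ℝ)) : Set ((Fin k → ℝ) × (Fin n → ℝ)) :=
  graphOver Φ σ + ({0} : Set (Fin k → ℝ)) ×ˢ τ

/-- The embedding of the lattice `ℤ^k` into `ℝ^k`. -/
def latticeEmb (k : ℕ) : (Fin k → ℤ) →+ (Fin k → ℝ) where
  toFun v := fun i => (v i : ℝ)
  map_zero' := by funext i; simp
  map_add' v w := by funext i; simp [Pi.add_apply]

/-- A cone is smooth (unimodular) with respect to a lattice `f : L → E` if it is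
generated by (the images of) part of a `ℤ`-basis of `L`. -/
def IsSmoothCone {L E : Type*} [AddCommGroup L] [AddCommMonoid E] [Module ℝ E]
    (f : L →+ E) (C : Set E) : Prop :=
  ∃ (m : ℕ) (b : Module.Basis (Fin m) ℤ L) (t : Finset (Fin m)),
    C = posSpan (f '' (b '' (t : Set (Fin m))))

-- auxiliary lemmas

lemma posSpan_union {E : Type*} [AddCommMonoid E] [Module ℝ E] (A B : Set E) :
    posSpan (A ∪ B) = posSpan A + posSpan B := by
  unfold posSpan
  rw [Submodule.span_union, Submodule.coe_sup]

lemma posSpan_image {E F : Type*} [AddCommMonoid E] [Module ℝ E] [AddCommMonoid F] [Module ℝ F]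
    (f : E →ₗ[ℝ] F) (S : Set E) : f '' posSpan S = posSpan (f '' S) := by
  unfold posSpan
  have h := Submodule.map_span (f.restrictScalars {c : ℝ // 0 ≤ c}) S
  rw [show (⇑f : E → F) = ⇑(f.restrictScalars {c : ℝ // 0 ≤ c}) from rfl, ← h]
  rfl

lemma latticeEmb_injective (k : ℕ) : Function.Injective (latticeEmb k) := by
  intro u v h
  funext i
  have : ((u i : ℝ)) = (v i : ℝ) := congrFun h i
  exact_mod_cast this

theorem stmt6 (k n : ℕ) (σ : Set (Fin k → ℝ)) (hσ : IsSmoothCone (latticeEmb k) σ)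
    (τ : Set (Fin n → ℝ)) (hτ : IsSmoothCone (latticeEmb n) τ)
    (Φ : (Fin k → ℝ) →ₗ[ℝ] (Fin n → ℝ))
    (hΦ : ∀ v : Fin k → ℤ, ∃ w : Fin n → ℤ, Φ (latticeEmb k v) = latticeEmb n w) :
    IsSmoothCone ((latticeEmb k).prodMap (latticeEmb n)) (twistedCone Φ σ τ) := by
  obtain ⟨m, b, t, hσ⟩ := hσ
  obtain ⟨m', c, t', hτ⟩ := hτ
  -- integral version of Φ
  set ψ₀ : (Fin k → ℤ) → (Fin n → ℤ) := fun v => Classical.choose (hΦ v) with hψ₀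
  have hψ : ∀ v, latticeEmb n (ψ₀ v) = Φ (latticeEmb k v) :=
    fun v => (Classical.choose_spec (hΦ v)).symm
  have hψadd : ∀ u v, ψ₀ (u + v) = ψ₀ u + ψ₀ v := by
    intro u v
    apply latticeEmb_injective n
    rw [map_add, hψ, hψ, hψ, map_add, map_add]
  set ψ : (Fin k → ℤ) →ₗ[ℤ] (Fin n → ℤ) :=
    (AddMonoidHom.mk' ψ₀ hψadd).toIntLinearMap with hψdef
  -- shear automorphism of the lattice
  set f₁ : ((Fin k → ℤ) × (Fin n → ℤ)) →ₗ[ℤ] ((Fin k → ℤ) × (Fin n → ℤ)) :=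
    (LinearMap.fst ℤ _ _).prod (LinearMap.snd ℤ _ _ + ψ.comp (LinearMap.fst ℤ _ _)) with hf₁
  set f₂ : ((Fin k → ℤ) × (Fin n → ℤ)) →ₗ[ℤ] ((Fin k → ℤ) × (Fin n → ℤ)) :=
    (LinearMap.fst ℤ _ _).prod (LinearMap.snd ℤ _ _ - ψ.comp (LinearMap.fst ℤ _ _)) with hf₂
  set e : ((Fin k → ℤ) × (Fin n → ℤ)) ≃ₗ[ℤ] ((Fin k → ℤ) × (Fin n → ℤ)) :=
    LinearEquiv.ofLinear f₁ f₂
      (by apply LinearMap.ext; intro p; simp [hf₁, hf₂])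
      (by apply LinearMap.ext; intro p; simp [hf₁, hf₂]) with he
  have he_apply : ∀ p : (Fin k → ℤ) × (Fin n → ℤ), e p = (p.1, p.2 + ψ p.1) := fun p => rfl
  set B : Module.Basis (Fin (m + m')) ℤ ((Fin k → ℤ) × (Fin n → ℤ)) :=
    (((b.prod c).map e).reindex finSumFinEquiv) with hB
  refine ⟨m + m', B, (t.disjSum t').map finSumFinEquiv.toEmbedding, ?_⟩
  set F := (latticeEmb k).prodMap (latticeEmb n) with hF
  set g : (Fin k → ℝ) →ₗ[ℝ] ((Fin k → ℝ) × (Fin n → ℝ)) := LinearMap.prod LinearMap.id Φ with hg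
  set inr : (Fin n → ℝ) →ₗ[ℝ] ((Fin k → ℝ) × (Fin n → ℝ)) := LinearMap.inr ℝ _ _ with hinr
  have hBcomp : ∀ x, B (finSumFinEquiv x) = e ((b.prod c) x) := by
    intro x; simp [hB]
  have hcoe : ((t.disjSum t') : Set (Fin m ⊕ Fin m')) =
      Sum.inl '' (t : Set (Fin m)) ∪ Sum.inr '' (t' : Set (Fin m')) := by
    ext x
    cases x <;> simp
  have hinl_elt : ∀ i : Fin m, F (e ((b.prod c) (Sum.inl i))) = g (latticeEmb k (b i)) := by
    intro i
    have h1 : (b.prod c) (Sum.inl i) = (b i, 0) := Prod.ext (by simp) (by simp)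
    rw [h1, he_apply]
    show ((latticeEmb k) (b i), (latticeEmb n) (0 + ψ₀ (b i))) =
      ((latticeEmb k) (b i), Φ ((latticeEmb k) (b i)))
    rw [zero_add, hψ]
  have hinr_elt : ∀ j : Fin m', F (e ((b.prod c) (Sum.inr j))) = inr (latticeEmb n (c j)) := by
    intro j
    have h1 : (b.prod c) (Sum.inr j) = (0, c j) := Prod.ext (by simp) (by simp)
    rw [h1, he_apply]
    show ((latticeEmb k) 0, (latticeEmb n) (c j + ψ₀ 0)) = (0, (latticeEmb n) (c j))
    have hz : ψ₀ (0 : Fin k → ℤ) = 0 := by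
      apply latticeEmb_injective n
      rw [hψ, map_zero, map_zero, map_zero]
    rw [hz, add_zero, map_zero]
  have hset : F '' (B '' (((t.disjSum t').map finSumFinEquiv.toEmbedding : Finset _) : Set _)) =
      (g '' (latticeEmb k '' (b '' (t : Set (Fin m))))) ∪
      (inr '' (latticeEmb n '' (c '' (t' : Set (Fin m'))))) := by
    rw [Finset.coe_map, Equiv.coe_toEmbedding, hcoe]
    rw [Set.image_union, Set.image_union, Set.image_union]
    congr 1
    · rw [Set.image_image, Set.image_image, Set.image_image, Set.image_image, Set.image_image]
      exact Set.image_congr fun i _ => by rw [hBcomp]; exact hinl_elt i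
    · rw [Set.image_image, Set.image_image, Set.image_image, Set.image_image, Set.image_image]
      exact Set.image_congr fun j _ => by rw [hBcomp]; exact hinr_elt j
  rw [hset, posSpan_union, ← posSpan_image, ← posSpan_image, ← hσ, ← hτ]
  unfold twistedCone graphOver
  have hprod : ({0} : Set (Fin k → ℝ)) ×ˢ τ = inr '' τ := by
    rw [Set.singleton_prod]
    ext p
    simp [hinr, eq_comm]
  rw [hprod]
  rfl
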